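/- Let E < E₀ and ρ ∈ 𝓜. Then S_E(ρ) = 𝓖_E(ρ, Φ(ρ)), i.e. the supremum defining S_E(ρ) is attained at the unique solution Φ(ρ) ∈ 𝓕_E of the Euler–Lagrange equation; moreover Φ(ρ) is the unique maximizer: 𝓖_E(ρ,φ) < S_E(ρ) for every φ ∈ 𝓕_E with φ ≠ Φ(ρ). -/

import Mathlib

open Real MeasureTheory Set Filter Topology Function

noncomputable section

/-- Mobility `χ(a) = a(1−a)`. -/
def chi (a : ℝ) : ℝ := a * (1 - a)

/-- The set `𝓜`: measurable density profiles on `[−1,1]` with values in `[0,1]`. -/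
def memM (ρ : ℝ → ℝ) : Prop :=
  Measurable ρ ∧ ∀ u ∈ Set.Icc (-1:ℝ) 1, ρ u ∈ Set.Icc (0:ℝ) 1

/-- `φ ∈ 𝓕_E`, with explicit derivative function `d`: `φ` is `C¹` on `[−1,1]` with
Lipschitz derivative `d`, `φ(−1) = φ₋`, `φ(1) = φ₊`, and `d > max 0 E` on `[−1,1]`. -/
def memF (φm φp E : ℝ) (φ d : ℝ → ℝ) : Prop :=
  (∀ u ∈ Set.Icc (-1:ℝ) 1, HasDerivWithinAt φ (d u) (Set.Icc (-1:ℝ) 1) u) ∧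
  (∃ L : NNReal, LipschitzOnWith L d (Set.Icc (-1:ℝ) 1)) ∧
  φ (-1) = φm ∧ φ 1 = φp ∧
  (∀ u ∈ Set.Icc (-1:ℝ) 1, max 0 E < d u)

/-- The Euler–Lagrange equation `φ''/(φ'(φ'−E)) + 1/(1+e^φ) = ρ` holds Lebesgue-a.e.
on `(−1,1)`, where `d = φ'`. -/
def solvesEL (E : ℝ) (ρ φ d : ℝ → ℝ) : Prop :=
  ∀ᵐ u ∂(volume : Measure ℝ), u ∈ Set.Ioo (-1:ℝ) 1 →
    ∃ d2 : ℝ, HasDerivAt d d2 u ∧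
      d2 / (d u * (d u - E)) + 1 / (1 + Real.exp (φ u)) = ρ u

/-- The functional `𝓖_E(ρ,φ)` (with `d = φ'`), including the `E = 0` case.
Recall the convention `0 log 0 = 0` (in Lean `Real.log 0 = 0`). -/
def GEint (E A : ℝ) (ρ φ d : ℝ → ℝ) : ℝ :=
  ∫ u in (-1:ℝ)..1,
    (ρ u * Real.log (ρ u) + (1 - ρ u) * Real.log (1 - ρ u)
      + (1 - ρ u) * φ u - Real.log (1 + Real.exp (φ u))
      + (if E = 0 then Real.log (d u) + 1
         else E⁻¹ * (d u * Real.log (d u) - (d u - E) * Real.log (d u - E)))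
      - A)

/-- `S_E(ρ) = sup_{φ ∈ 𝓕_E} 𝓖_E(ρ,φ)`. -/
def SE (φm φp E A : ℝ) (ρ : ℝ → ℝ) : ℝ :=
  sSup { x | ∃ φ d : ℝ → ℝ, memF φm φp E φ d ∧ x = GEint E A ρ φ d }


lemma seq_inv_pos (n : ℕ) : (0:ℝ) < ((n:ℝ)+1)⁻¹ := by positivity

lemma seq_inv_tendsto : Tendsto (fun n : ℕ => ((n:ℝ)+1)⁻¹) atTop (𝓝 0) := by
  simpa [one_div] using tendsto_one_div_add_atTop_nhds_zero_nat (𝕜 := ℝ)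

/-- Sequential FTC-1: `(∫_b^{b+hₙ} F)/hₙ → F b` for continuous `F`. -/
lemma seq_ftc1 (F : ℝ → ℝ) (hFc : Continuous F) (b : ℝ) :
    Tendsto (fun n : ℕ => (∫ t in b..(b + ((n:ℝ)+1)⁻¹), F t) / ((n:ℝ)+1)⁻¹)
      atTop (𝓝 (F b)) := by
  have hI : HasDerivAt (fun x => ∫ t in b..x, F t) (F b) b :=
    intervalIntegral.integral_hasDerivAt_right (hFc.intervalIntegrable _ _)
      (hFc.stronglyMeasurable.stronglyMeasurableAtFilter) hFc.continuousAt
  rw [hasDerivAt_iff_tendsto_slope] at hI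
  have hx : Tendsto (fun n : ℕ => b + ((n:ℝ)+1)⁻¹) atTop (𝓝[≠] b) := by
    apply tendsto_nhdsWithin_of_tendsto_nhds_of_eventually_within
    · simpa using tendsto_const_nhds.add seq_inv_tendsto
    · filter_upwards with n
      have := seq_inv_pos n
      simp only [mem_compl_iff, mem_singleton_iff]
      intro h; nlinarith [seq_inv_pos n]
  have heq : ∀ n : ℕ, slope (fun x => ∫ t in b..x, F t) b (b + ((n:ℝ)+1)⁻¹)
      = (∫ t in b..(b + ((n:ℝ)+1)⁻¹), F t) / ((n:ℝ)+1)⁻¹ := by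
    intro n
    rw [slope_def_field]
    simp [intervalIntegral.integral_same]
  have := hI.comp hx
  simpa only [Function.comp_def, heq] using this

/-- FTC for Lipschitz functions with a.e. derivative on `(-1,1)`. -/
lemma ftcLip (F T : ℝ → ℝ) (K : ℝ) (hFc : Continuous F)
    (hlip : ∀ x y : ℝ, |F x - F y| ≤ K * |x - y|)
    (hT : ∀ᵐ u ∂(volume : Measure ℝ), u ∈ Set.Ioo (-1:ℝ) 1 → HasDerivAt F (T u) u)
    (hTm : AEStronglyMeasurable T (volume.restrict (Set.Ioc (-1:ℝ) 1))) :
    ∫ u in Set.Ioc (-1:ℝ) 1, T u = F 1 - F (-1) := by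
  set h : ℕ → ℝ := fun n => ((n:ℝ)+1)⁻¹ with hh
  set Fn : ℕ → ℝ → ℝ := fun n u => (F (u + h n) - F u) / h n with hFn
  -- Step B : value of ∫ Fn
  have stepB : ∀ n : ℕ, ∫ u in Set.Ioc (-1:ℝ) 1, Fn n u
      = (∫ t in (1:ℝ)..(1 + h n), F t) / h n - (∫ t in (-1:ℝ)..(-1 + h n), F t) / h n := by
    intro n
    have hpos := seq_inv_pos n
    have i1 : IntervalIntegrable (fun u => F (u + h n)) volume (-1) 1 :=
      (hFc.comp (continuous_id.add continuous_const)).intervalIntegrable _ _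
    have i2 : IntervalIntegrable F volume (-1) 1 := hFc.intervalIntegrable _ _
    have e1 : ∫ u in Set.Ioc (-1:ℝ) 1, Fn n u = ∫ u in (-1:ℝ)..1, Fn n u := by
      rw [intervalIntegral.integral_of_le (by norm_num)]
    rw [e1]
    have e2 : ∫ u in (-1:ℝ)..1, Fn n u
        = ((∫ u in (-1:ℝ)..1, F (u + h n)) - ∫ u in (-1:ℝ)..1, F u) / h n := by
      simp only [hFn]
      rw [intervalIntegral.integral_div, intervalIntegral.integral_sub i1 i2]
    rw [e2, intervalIntegral.integral_comp_add_right]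
    have a1 : (∫ t in (-1:ℝ)..(-1 + h n), F t) + ∫ t in (-1 + h n)..1, F t
        = ∫ t in (-1:ℝ)..1, F t :=
      intervalIntegral.integral_add_adjacent_intervals (hFc.intervalIntegrable _ _)
        (hFc.intervalIntegrable _ _)
    have a2 : (∫ t in (-1 + h n)..(1:ℝ), F t) + ∫ t in (1:ℝ)..(1 + h n), F t
        = ∫ t in (-1 + h n)..(1 + h n), F t :=
      intervalIntegral.integral_add_adjacent_intervals (hFc.intervalIntegrable _ _)
        (hFc.intervalIntegrable _ _)
    have key : (∫ t in (-1 + h n)..(1 + h n), F t) - ∫ t in (-1:ℝ)..1, F t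
        = (∫ t in (1:ℝ)..(1 + h n), F t) - ∫ t in (-1:ℝ)..(-1 + h n), F t := by
      linarith [a1, a2]
    rw [div_sub_div_same, key]
  -- Step C : DCT
  have stepC : Tendsto (fun n => ∫ u in Set.Ioc (-1:ℝ) 1, Fn n u) atTop
      (𝓝 (∫ u in Set.Ioc (-1:ℝ) 1, T u)) := by
    apply MeasureTheory.tendsto_integral_of_dominated_convergence (fun _ => K)
    · intro n
      exact (((hFc.comp (continuous_id.add continuous_const)).sub hFc).div_const
        _).aestronglyMeasurable
    · exact integrableOn_const measure_Ioc_lt_top.ne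
    · intro n
      filter_upwards with u
      have hpos := seq_inv_pos n
      have : |F (u + h n) - F u| ≤ K * h n := by
        have := hlip (u + h n) u
        simpa [abs_of_pos hpos, hh] using this
      rw [Real.norm_eq_abs, hFn]
      rw [abs_div, abs_of_pos hpos, div_le_iff₀ hpos]
      simpa using this
    · have h1 : ∀ᵐ u ∂(volume.restrict (Set.Ioc (-1:ℝ) 1)), u ∈ Set.Ioo (-1:ℝ) 1 := by
        have hsub : ∀ᵐ u ∂(volume.restrict (Set.Ioc (-1:ℝ) 1)), u ∈ Set.Ioc (-1:ℝ) 1 :=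
          ae_restrict_mem measurableSet_Ioc
        have hne : ∀ᵐ u ∂(volume.restrict (Set.Ioc (-1:ℝ) 1)), u ≠ 1 := by
          refine ae_iff.2 ?_
          have hss : {a : ℝ | ¬a ≠ 1} ⊆ ({1} : Set ℝ) := by
            intro x hx; simp only [mem_setOf_eq, not_not] at hx; exact hx
          refine measure_mono_null hss ?_
          exact le_antisymm (le_trans (Measure.restrict_le_self _) (by simp)) bot_le
        filter_upwards [hsub, hne] with u hu hune
        exact ⟨hu.1, lt_of_le_of_ne hu.2 hune⟩
      have hT' : ∀ᵐ u ∂(volume.restrict (Set.Ioc (-1:ℝ) 1)),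
          u ∈ Set.Ioo (-1:ℝ) 1 → HasDerivAt F (T u) u := ae_restrict_of_ae hT
      filter_upwards [h1, hT'] with u hu hder
      have hd := hder hu
      rw [hasDerivAt_iff_tendsto_slope] at hd
      have hx : Tendsto (fun n : ℕ => u + h n) atTop (𝓝[≠] u) := by
        apply tendsto_nhdsWithin_of_tendsto_nhds_of_eventually_within
        · simpa using tendsto_const_nhds.add seq_inv_tendsto
        · filter_upwards with n
          simp only [mem_compl_iff, mem_singleton_iff]
          intro hcon; nlinarith [seq_inv_pos n]
      have heq : ∀ n : ℕ, slope F u (u + h n) = Fn n u := by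
        intro n
        rw [slope_def_field, hFn]
        simp
      have := hd.comp hx
      simpa only [Function.comp_def, heq] using this
  -- combine
  have stepA : Tendsto (fun n => (∫ t in (1:ℝ)..(1 + h n), F t) / h n
      - (∫ t in (-1:ℝ)..(-1 + h n), F t) / h n) atTop (𝓝 (F 1 - F (-1))) :=
    (seq_ftc1 F hFc 1).sub (seq_ftc1 F hFc (-1))
  have : Tendsto (fun n => ∫ u in Set.Ioc (-1:ℝ) 1, Fn n u) atTop (𝓝 (F 1 - F (-1))) := by
    simp only [stepB]; exact stepA
  exact tendsto_nhds_unique stepC this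


lemma tangent_lt_of_strictAntiOn (f f' : ℝ → ℝ) (m p q : ℝ)
    (hderiv : ∀ x ∈ Set.Ioi m, HasDerivAt f (f' x) x)
    (hanti : StrictAntiOn f' (Set.Ioi m))
    (hp : m < p) (hq : m < q) (hne : q ≠ p) :
    f q < f p + f' p * (q - p) := by
  rcases lt_or_gt_of_ne hne with hlt | hgt
  · obtain ⟨c, hc, hceq⟩ := exists_hasDerivAt_eq_slope f f' hlt
      (fun x hx => (hderiv x (lt_of_lt_of_le hq hx.1)).continuousAt.continuousWithinAt)
      (fun x hx => hderiv x (lt_trans hq hx.1))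
    have h1 : f p - f q = f' c * (p - q) := by
      rw [hceq, div_mul_cancel₀ _ (sub_ne_zero.2 hlt.ne')]
    have h2 : f' p < f' c := hanti (lt_trans hq hc.1) hp hc.2
    nlinarith [sub_pos.2 hlt]
  · obtain ⟨c, hc, hceq⟩ := exists_hasDerivAt_eq_slope f f' hgt
      (fun x hx => (hderiv x (lt_of_lt_of_le hp hx.1)).continuousAt.continuousWithinAt)
      (fun x hx => hderiv x (lt_trans hp hx.1))
    have h1 : f q - f p = f' c * (q - p) := by
      rw [hceq, div_mul_cancel₀ _ (sub_ne_zero.2 hgt.ne')]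
    have h2 : f' c < f' p := hanti hp (lt_trans hp hc.1) hc.1
    nlinarith [sub_pos.2 hgt]
lemma tangent_gt_of_strictMonoOn (f f' : ℝ → ℝ) (m p q : ℝ)
    (hderiv : ∀ x ∈ Set.Ioi m, HasDerivAt f (f' x) x)
    (hmono : StrictMonoOn f' (Set.Ioi m))
    (hp : m < p) (hq : m < q) (hne : q ≠ p) :
    f p + f' p * (q - p) < f q := by
  have := tangent_lt_of_strictAntiOn (fun x => -f x) (fun x => -f' x) m p q
    (fun x hx => (hderiv x hx).neg)
    (fun a ha b hb hab => by simpa using hmono ha hb hab) hp hq hne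
  linarith


/-- The function `g_E` in the `φ'`-part of the integrand. -/
noncomputable def gfun (E : ℝ) : ℝ → ℝ := fun p =>
  if E = 0 then Real.log p + 1
  else E⁻¹ * (p * Real.log p - (p - E) * Real.log (p - E))

/-- Derivative of `gfun`. -/
noncomputable def gder (E : ℝ) : ℝ → ℝ := fun p =>
  if E = 0 then p⁻¹ else E⁻¹ * (Real.log p - Real.log (p - E))

lemma gfun_hasDeriv (E p : ℝ) (hp : max 0 E < p) : HasDerivAt (gfun E) (gder E p) p := by
  have hp0 : 0 < p := lt_of_le_of_lt (le_max_left _ _) hp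
  have hpE : 0 < p - E := sub_pos.2 (lt_of_le_of_lt (le_max_right _ _) hp)
  unfold gfun gder
  by_cases hE : E = 0
  · simp only [hE, if_true, eq_self_iff_true]
    simpa using (Real.hasDerivAt_log hp0.ne').add_const 1
  · simp only [hE, if_false]
    have h1 : HasDerivAt (fun p : ℝ => p * Real.log p) (Real.log p + 1) p := by
      have := (hasDerivAt_id p).mul (Real.hasDerivAt_log hp0.ne')
      exact this.congr_deriv (by rw [one_mul, id_eq, mul_inv_cancel₀ hp0.ne'])
    have h2 : HasDerivAt (fun p : ℝ => (p - E) * Real.log (p - E)) (Real.log (p - E) + 1) p := by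
      have hsub : HasDerivAt (fun p : ℝ => p - E) 1 p := (hasDerivAt_id p).sub_const E
      have hlog : HasDerivAt (fun p : ℝ => Real.log (p - E)) (p - E)⁻¹ p := by
        exact ((Real.hasDerivAt_log hpE.ne').comp p hsub).congr_deriv (mul_one _)
      have := hsub.mul hlog
      exact this.congr_deriv (by rw [one_mul, mul_inv_cancel₀ hpE.ne'])
    have := ((h1.sub h2).const_mul E⁻¹)
    exact this.congr_deriv (by ring)
lemma gder_hasDeriv (E p : ℝ) (hp : max 0 E < p) :
    HasDerivAt (gder E) (-(p * (p - E))⁻¹) p := by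
  have hp0 : 0 < p := lt_of_le_of_lt (le_max_left _ _) hp
  have hpE : 0 < p - E := sub_pos.2 (lt_of_le_of_lt (le_max_right _ _) hp)
  unfold gder
  by_cases hE : E = 0
  · simp only [hE, if_true]
    have h := hasDerivAt_inv hp0.ne'
    exact h.congr_deriv (by rw [sub_zero, ← sq])
  · simp only [hE, if_false]
    have hlog : HasDerivAt (fun p : ℝ => Real.log p) p⁻¹ p := Real.hasDerivAt_log hp0.ne'
    have hlog2 : HasDerivAt (fun p : ℝ => Real.log (p - E)) (p - E)⁻¹ p := by
      exact ((Real.hasDerivAt_log hpE.ne').comp p ((hasDerivAt_id p).sub_const E)).congr_deriv (mul_one _)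
    have := (hlog.sub hlog2).const_mul E⁻¹
    exact this.congr_deriv (by field_simp; ring)
lemma gder_anti (E : ℝ) : StrictAntiOn (gder E) (Set.Ioi (max 0 E)) := by
  apply strictAntiOn_of_deriv_neg (convex_Ioi _)
  · intro x hx
    exact (gder_hasDeriv E x hx).continuousAt.continuousWithinAt
  · intro x hx
    rw [interior_Ioi] at hx
    rw [(gder_hasDeriv E x hx).deriv]
    have hp0 : 0 < x := lt_of_le_of_lt (le_max_left _ _) hx
    have hpE : 0 < x - E := sub_pos.2 (lt_of_le_of_lt (le_max_right _ _) hx)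
    have : 0 < x * (x - E) := mul_pos hp0 hpE
    simp only [neg_neg, neg_lt_zero]
    positivity


noncomputable def Lfun : ℝ → ℝ := fun x => Real.log (1 + Real.exp x)
noncomputable def Lder : ℝ → ℝ := fun x => Real.exp x / (1 + Real.exp x)

lemma one_add_exp_pos (x : ℝ) : 0 < 1 + Real.exp x := by positivity

lemma Lfun_hasDeriv (x : ℝ) : HasDerivAt Lfun (Lder x) x := by
  have h : HasDerivAt (fun x : ℝ => 1 + Real.exp x) (Real.exp x) x :=
    (Real.hasDerivAt_exp x).const_add 1
  exact h.log (one_add_exp_pos x).ne'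

lemma Lder_hasDeriv (x : ℝ) : HasDerivAt Lder (Real.exp x / (1 + Real.exp x)^2) x := by
  have h1 := Real.hasDerivAt_exp x
  have h2 : HasDerivAt (fun x : ℝ => 1 + Real.exp x) (Real.exp x) x :=
    (Real.hasDerivAt_exp x).const_add 1
  have := h1.div h2 (one_add_exp_pos x).ne'
  exact this.congr_deriv (by congr 1; ring)

lemma Lder_mono : StrictMono Lder := by
  apply strictMono_of_deriv_pos
  intro x
  rw [(Lder_hasDeriv x).deriv]
  positivity

lemma Lder_compl (x : ℝ) : 1 - Lder x = (1 + Real.exp x)⁻¹ := by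
  unfold Lder
  field_simp
  ring

lemma Lfun_tangent_le (x y : ℝ) : Lfun x + Lder x * (y - x) ≤ Lfun y := by
  rcases eq_or_ne y x with rfl | hne
  · simp
  · have := tangent_gt_of_strictMonoOn Lfun Lder (min x y - 1) x y
      (fun z _ => Lfun_hasDeriv z) (Lder_mono.strictMonoOn _)
      (by linarith [min_le_left x y]) (by linarith [min_le_right x y]) hne
    linarith
lemma Lfun_tangent_lt (x y : ℝ) (hne : y ≠ x) : Lfun x + Lder x * (y - x) < Lfun y := by
  have := tangent_gt_of_strictMonoOn Lfun Lder (min x y - 1) x y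
    (fun z _ => Lfun_hasDeriv z) (Lder_mono.strictMonoOn _)
    (by linarith [min_le_left x y]) (by linarith [min_le_right x y]) hne
  linarith
lemma gfun_tangent_le (E p q : ℝ) (hp : max 0 E < p) (hq : max 0 E < q) :
    gfun E q ≤ gfun E p + gder E p * (q - p) := by
  rcases eq_or_ne q p with rfl | hne
  · simp
  · exact le_of_lt (tangent_lt_of_strictAntiOn (gfun E) (gder E) (max 0 E) p q
      (fun x hx => gfun_hasDeriv E x hx) (gder_anti E) hp hq hne)

lemma mul_log_bound {x : ℝ} (h0 : 0 ≤ x) (h1 : x ≤ 1) : |x * Real.log x| ≤ 1 := by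
  rcases h0.eq_or_lt with rfl | hx
  · simp
  · have hlog : Real.log x ≤ 0 := Real.log_nonpos h0 h1
    have hnp : x * Real.log x ≤ 0 := mul_nonpos_of_nonneg_of_nonpos h0 hlog
    rw [abs_of_nonpos hnp]
    have hinv : Real.log x⁻¹ ≤ x⁻¹ - 1 := Real.log_le_sub_one_of_pos (by positivity)
    have : -(x * Real.log x) = x * Real.log x⁻¹ := by rw [Real.log_inv]; ring
    rw [this]
    have h2 : x * Real.log x⁻¹ ≤ x * (x⁻¹ - 1) := mul_le_mul_of_nonneg_left hinv h0
    have h3 : x * (x⁻¹ - 1) = 1 - x := by field_simp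
    linarith


/-- generic Lipschitz estimate from derivative bound via MVT. -/
lemma lipschitzOnIcc (f f' : ℝ → ℝ) (a b M : ℝ)
    (hcont : ContinuousOn f (Set.Icc a b))
    (hderiv : ∀ x ∈ Set.Ioo a b, HasDerivAt f (f' x) x)
    (hM : ∀ x ∈ Set.Ioo a b, |f' x| ≤ M) :
    ∀ p ∈ Set.Icc a b, ∀ q ∈ Set.Icc a b, |f q - f p| ≤ M * |q - p| := by
  have main : ∀ p ∈ Set.Icc a b, ∀ q ∈ Set.Icc a b, p < q → |f q - f p| ≤ M * |q - p| := by
    intro p hp q hq hpq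
    obtain ⟨r, hr, hre⟩ := exists_hasDerivAt_eq_slope f f' hpq
      (hcont.mono (Set.Icc_subset_Icc hp.1 hq.2))
      (fun x hx => hderiv x ⟨lt_of_le_of_lt hp.1 hx.1, lt_of_lt_of_le hx.2 hq.2⟩)
    have h1 : f q - f p = f' r * (q - p) := by
      rw [hre, div_mul_cancel₀ _ (sub_ne_zero.2 hpq.ne')]
    rw [h1, abs_mul]
    exact mul_le_mul_of_nonneg_right
      (hM r ⟨lt_of_le_of_lt hp.1 hr.1, lt_of_lt_of_le hr.2 hq.2⟩) (abs_nonneg _)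
  intro p hp q hq
  rcases lt_trichotomy p q with h | h | h
  · exact main p hp q hq h
  · simp [h]
  · rw [abs_sub_comm (f q), abs_sub_comm q]
    exact main q hq p hp h

noncomputable def clamp (u : ℝ) : ℝ := max (-1) (min 1 u)

lemma clamp_mem (u : ℝ) : clamp u ∈ Set.Icc (-1:ℝ) 1 :=
  ⟨le_max_left _ _, max_le (by norm_num) (min_le_left _ _)⟩

lemma clamp_eq {u : ℝ} (hu : u ∈ Set.Icc (-1:ℝ) 1) : clamp u = u := by
  unfold clamp
  rw [min_eq_right hu.2, max_eq_right hu.1]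

lemma clamp_eq_projIcc (u : ℝ) : clamp u = (Set.projIcc (-1:ℝ) 1 (by norm_num) u : ℝ) := rfl

lemma clamp_lip (x y : ℝ) : |clamp x - clamp y| ≤ |x - y| := by
  have := (LipschitzWith.projIcc (show (-1:ℝ) ≤ 1 by norm_num)).dist_le_mul x y
  rw [Subtype.dist_eq] at this
  simpa [clamp_eq_projIcc, Real.dist_eq] using this

lemma clamp_continuous : Continuous clamp :=
  (continuous_const.max (continuous_const.min continuous_id))

lemma memF_cont_phi {φm φp E : ℝ} {φ d : ℝ → ℝ} (hF : memF φm φp E φ d) :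
    ContinuousOn φ (Set.Icc (-1:ℝ) 1) :=
  fun u hu => (hF.1 u hu).continuousWithinAt

lemma memF_cont_d {φm φp E : ℝ} {φ d : ℝ → ℝ} (hF : memF φm φp E φ d) :
    ContinuousOn d (Set.Icc (-1:ℝ) 1) := by
  obtain ⟨L, hL⟩ := hF.2.1
  exact hL.continuousOn

lemma IccNE : (Set.Icc (-1:ℝ) 1).Nonempty := ⟨0, by norm_num⟩

lemma memF_d_lower {φm φp E : ℝ} {φ d : ℝ → ℝ} (hF : memF φm φp E φ d) :
    ∃ c, max 0 E < c ∧ ∀ u ∈ Set.Icc (-1:ℝ) 1, c ≤ d u := by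
  obtain ⟨x, hx, hmin⟩ := isCompact_Icc.exists_isMinOn IccNE (memF_cont_d hF)
  exact ⟨d x, hF.2.2.2.2 x hx, fun u hu => isMinOn_iff.1 hmin u hu⟩

lemma bound_of_contOn {f : ℝ → ℝ} (hf : ContinuousOn f (Set.Icc (-1:ℝ) 1)) :
    ∃ B, 0 ≤ B ∧ ∀ u ∈ Set.Icc (-1:ℝ) 1, |f u| ≤ B := by
  obtain ⟨C, hC⟩ := isCompact_Icc.exists_bound_of_continuousOn hf
  exact ⟨max C 0, le_max_right _ _, fun u hu => le_trans (hC u hu) (le_max_left _ _)⟩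

lemma Lder_nonneg (x : ℝ) : 0 ≤ Lder x := by
  unfold Lder; positivity

lemma Lder_lt_one (x : ℝ) : Lder x < 1 := by
  unfold Lder
  rw [div_lt_one (one_add_exp_pos x)]
  linarith [Real.exp_pos x]

lemma key (E A : ℝ) (φm φp : ℝ) (ρ φ d ψ e : ℝ → ℝ)
    (hρ : memM ρ) (hF : memF φm φp E φ d) (hG : memF φm φp E ψ e)
    (hEL : solvesEL E ρ φ d) :
    GEint E A ρ ψ e = GEint E A ρ φ d
      + (∫ u in (-1:ℝ)..1, (Lfun (φ u) - Lfun (ψ u) + Lder (φ u) * (ψ u - φ u)))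
      + (∫ u in (-1:ℝ)..1, (gfun E (e u) - gfun E (d u) - gder E (d u) * (e u - d u))) := by
  set s : Set ℝ := Set.Icc (-1:ℝ) 1 with hs
  have hφc := memF_cont_phi hF
  have hdc := memF_cont_d hF
  have hψc := memF_cont_phi hG
  have hec := memF_cont_d hG
  have hdgt := hF.2.2.2.2
  have hegt := hG.2.2.2.2
  obtain ⟨c, hcgt, hclb⟩ := memF_d_lower hF
  -- bounds
  obtain ⟨Bφ, hBφ0, hBφ⟩ := bound_of_contOn hφc
  obtain ⟨Bψ, hBψ0, hBψ⟩ := bound_of_contOn hψc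
  obtain ⟨Bd, hBd0, hBd⟩ := bound_of_contOn hdc
  obtain ⟨Be, hBe0, hBe⟩ := bound_of_contOn hec
  -- continuity of composite functions
  have hLfun_cont : Continuous Lfun := by
    rw [continuous_iff_continuousAt]; exact fun x => (Lfun_hasDeriv x).continuousAt
  have hLder_cont : Continuous Lder := by
    rw [continuous_iff_continuousAt]; exact fun x => (Lder_hasDeriv x).continuousAt
  have hgd_cont : ContinuousOn (fun u => gfun E (d u)) s := fun u hu =>
    ((gfun_hasDeriv E (d u) (hdgt u hu)).continuousAt).comp_continuousWithinAt (hdc u hu)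
  have hge_cont : ContinuousOn (fun u => gfun E (e u)) s := fun u hu =>
    ((gfun_hasDeriv E (e u) (hegt u hu)).continuousAt).comp_continuousWithinAt (hec u hu)
  have hgdd_cont : ContinuousOn (fun u => gder E (d u)) s := fun u hu =>
    ((gder_hasDeriv E (d u) (hdgt u hu)).continuousAt).comp_continuousWithinAt (hdc u hu)
  obtain ⟨BG, hBG0, hBG⟩ := bound_of_contOn hgdd_cont
  -- the three pieces
  set h1 : ℝ → ℝ := fun u => Lfun (φ u) - Lfun (ψ u) + Lder (φ u) * (ψ u - φ u) with hh1
  set h2 : ℝ → ℝ := fun u => gfun E (e u) - gfun E (d u) - gder E (d u) * (e u - d u) with hh2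
  set T : ℝ → ℝ := fun u => (1 - Lder (φ u) - ρ u) * (ψ u - φ u)
      + gder E (d u) * (e u - d u) with hT
  set P1 : ℝ → ℝ := fun u => ρ u * Real.log (ρ u) + (1 - ρ u) * Real.log (1 - ρ u)
      + (1 - ρ u) * φ u with hP1
  set P2 : ℝ → ℝ := fun u => - Lfun (φ u) + gfun E (d u) - A with hP2
  -- continuity of h1 h2
  have hh1c : ContinuousOn h1 s := by
    apply ContinuousOn.add
    · exact ((hLfun_cont.comp_continuousOn hφc).sub (hLfun_cont.comp_continuousOn hψc))
    · exact (hLder_cont.comp_continuousOn hφc).mul (hψc.sub hφc)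
  have hh2c : ContinuousOn h2 s :=
    (hge_cont.sub hgd_cont).sub (hgdd_cont.mul (hec.sub hdc))
  -- integrability
  have int_h1 : IntervalIntegrable h1 volume (-1) 1 :=
    hh1c.intervalIntegrable_of_Icc (by norm_num)
  have int_h2 : IntervalIntegrable h2 volume (-1) 1 :=
    hh2c.intervalIntegrable_of_Icc (by norm_num)
  have hIocIcc : Set.Ioc (-1:ℝ) 1 ⊆ s := Set.Ioc_subset_Icc_self
  have hrr : ∀ᵐ u ∂(volume.restrict (Set.Ioc (-1:ℝ) 1)), u ∈ Set.Ioc (-1:ℝ) 1 :=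
    ae_restrict_mem measurableSet_Ioc
  have hρm : Measurable ρ := hρ.1
  have hρb : ∀ u ∈ s, 0 ≤ ρ u ∧ ρ u ≤ 1 := fun u hu => ⟨(hρ.2 u hu).1, (hρ.2 u hu).2⟩
  have aesm_of_contOn : ∀ {f : ℝ → ℝ}, ContinuousOn f s →
      AEStronglyMeasurable f (volume.restrict (Set.Ioc (-1:ℝ) 1)) := by
    intro f hf
    exact (hf.mono hIocIcc).aestronglyMeasurable measurableSet_Ioc
  have hTm : AEStronglyMeasurable T (volume.restrict (Set.Ioc (-1:ℝ) 1)) := by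
    apply AEStronglyMeasurable.add
    · exact ((aestronglyMeasurable_const.sub
          (aesm_of_contOn (hLder_cont.comp_continuousOn hφc))).sub
          hρm.aestronglyMeasurable.restrict).mul
        (aesm_of_contOn (hψc.sub hφc))
    · exact (aesm_of_contOn hgdd_cont).mul (aesm_of_contOn (hec.sub hdc))
  have int_T : IntervalIntegrable T volume (-1) 1 := by
    rw [intervalIntegrable_iff, Set.uIoc_of_le (by norm_num : (-1:ℝ) ≤ 1)]
    apply MeasureTheory.Integrable.mono'
      (integrableOn_const measure_Ioc_lt_top.ne :
        IntegrableOn (fun _ => 3 * (Bψ + Bφ) + BG * (Be + Bd)) _ _)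
    · exact hTm
    · filter_upwards [hrr] with u hu
      have hus : u ∈ s := hIocIcc hu
      have b1 : |1 - Lder (φ u) - ρ u| ≤ 3 := by
        have := Lder_nonneg (φ u); have := Lder_lt_one (φ u)
        have := (hρb u hus).1; have := (hρb u hus).2
        rw [abs_le]; constructor <;> linarith
      have b2 : |ψ u - φ u| ≤ Bψ + Bφ :=
        le_trans (abs_sub _ _) (add_le_add (hBψ u hus) (hBφ u hus))
      have b3 : |e u - d u| ≤ Be + Bd :=
        le_trans (abs_sub _ _) (add_le_add (hBe u hus) (hBd u hus))
      rw [Real.norm_eq_abs]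
      calc |T u| ≤ |1 - Lder (φ u) - ρ u| * |ψ u - φ u| + |gder E (d u)| * |e u - d u| := by
            rw [hT]; exact le_trans (abs_add_le _ _) (by rw [abs_mul, abs_mul])
        _ ≤ 3 * (Bψ + Bφ) + BG * (Be + Bd) := by
            apply add_le_add
            · exact mul_le_mul b1 b2 (abs_nonneg _) (by norm_num)
            · exact mul_le_mul (hBG u hus) b3 (abs_nonneg _) hBG0
  have int_P1 : IntervalIntegrable P1 volume (-1) 1 := by
    rw [intervalIntegrable_iff, Set.uIoc_of_le (by norm_num : (-1:ℝ) ≤ 1)]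
    apply MeasureTheory.Integrable.mono'
      (integrableOn_const measure_Ioc_lt_top.ne :
        IntegrableOn (fun _ => 1 + 1 + Bφ) _ _)
    · apply AEStronglyMeasurable.add
      · exact ((Real.continuous_mul_log.measurable.comp hρm).aestronglyMeasurable.restrict).add
          ((Real.continuous_mul_log.measurable.comp (measurable_const.sub hρm)).aestronglyMeasurable.restrict)
      · exact ((measurable_const.sub hρm).aestronglyMeasurable.restrict).mul (aesm_of_contOn hφc)
    · filter_upwards [hrr] with u hu
      have hus : u ∈ s := hIocIcc hu
      have h01 := hρb u hus
      have b1 : |ρ u * Real.log (ρ u)| ≤ 1 := mul_log_bound h01.1 h01.2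
      have b2 : |(1 - ρ u) * Real.log (1 - ρ u)| ≤ 1 :=
        mul_log_bound (by linarith [h01.2]) (by linarith [h01.1])
      have b3 : |(1 - ρ u) * φ u| ≤ Bφ := by
        rw [abs_mul]
        calc |1 - ρ u| * |φ u| ≤ 1 * Bφ := by
              apply mul_le_mul _ (hBφ u hus) (abs_nonneg _) (by norm_num)
              rw [abs_le]; constructor <;> linarith [h01.1, h01.2]
          _ = Bφ := one_mul _
      rw [Real.norm_eq_abs, hP1]
      calc |ρ u * Real.log (ρ u) + (1 - ρ u) * Real.log (1 - ρ u) + (1 - ρ u) * φ u|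
          ≤ |ρ u * Real.log (ρ u) + (1 - ρ u) * Real.log (1 - ρ u)| + |(1 - ρ u) * φ u| :=
            abs_add_le _ _
        _ ≤ (|ρ u * Real.log (ρ u)| + |(1 - ρ u) * Real.log (1 - ρ u)|) + |(1 - ρ u) * φ u| :=
            add_le_add_left (abs_add_le _ _) _
        _ ≤ 1 + 1 + Bφ := by linarith
  have int_P2 : IntervalIntegrable P2 volume (-1) 1 := by
    apply ContinuousOn.intervalIntegrable_of_Icc (by norm_num)
    exact (((hLfun_cont.comp_continuousOn hφc).neg).add hgd_cont).sub continuousOn_const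
  -- ∫ T = 0 via ftcLip
  have hT0 : (∫ u in (-1:ℝ)..1, T u) = 0 := by
    set w : ℝ → ℝ := fun u => ψ u - φ u with hw
    have hw_cont : ContinuousOn w s := hψc.sub hφc
    set F0 : ℝ → ℝ := fun u => gder E (d u) * w u with hF0
    have hF0c : ContinuousOn F0 s := hgdd_cont.mul hw_cont
    obtain ⟨Ld, hLd⟩ := hF.2.1
    have hcBd : c ≤ Bd := le_trans (hclb 0 (by norm_num))
      (le_trans (le_abs_self _) (hBd 0 (by norm_num)))
    have hposr : ∀ r ∈ Set.Icc c Bd, 0 < r * (r - E) := by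
      intro r hr
      have h1 : max 0 E < r := lt_of_lt_of_le hcgt hr.1
      exact mul_pos (lt_of_le_of_lt (le_max_left _ _) h1)
        (sub_pos.2 (lt_of_le_of_lt (le_max_right _ _) h1))
    have hcont_inv : ContinuousOn (fun r => -(r*(r-E))⁻¹) (Set.Icc c Bd) := by
      apply ContinuousOn.neg
      exact ContinuousOn.inv₀ ((continuousOn_id.mul (continuousOn_id.sub continuousOn_const)))
        (fun r hr => (hposr r hr).ne')
    obtain ⟨Mg, hMg⟩ := isCompact_Icc.exists_bound_of_continuousOn hcont_inv
    have hMg0 : 0 ≤ Mg := le_trans (norm_nonneg _) (hMg c ⟨le_refl _, hcBd⟩)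
    have hgderlip := lipschitzOnIcc (gder E) (fun r => -(r*(r-E))⁻¹) c Bd Mg
      (fun r hr => (gder_hasDeriv E r (lt_of_lt_of_le hcgt hr.1)).continuousAt.continuousWithinAt)
      (fun r hr => gder_hasDeriv E r (lt_of_lt_of_le hcgt hr.1.le))
      (fun r hr => by have := hMg r (Set.Ioo_subset_Icc_self hr); rwa [Real.norm_eq_abs] at this)
    have hdmem : ∀ x ∈ s, d x ∈ Set.Icc c Bd := fun x hx =>
      ⟨hclb x hx, le_trans (le_abs_self _) (hBd x hx)⟩
    have hGlip : ∀ x ∈ s, ∀ y ∈ s,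
        |gder E (d x) - gder E (d y)| ≤ Mg * ((Ld:ℝ) * |x - y|) := by
      intro x hx y hy
      calc |gder E (d x) - gder E (d y)| ≤ Mg * |d x - d y| :=
            hgderlip (d y) (hdmem y hy) (d x) (hdmem x hx)
        _ ≤ Mg * ((Ld:ℝ) * |x - y|) := by
            apply mul_le_mul_of_nonneg_left _ hMg0
            have := hLd.dist_le_mul x hx y hy
            simpa [Real.dist_eq] using this
    have hwlip := lipschitzOnIcc w (fun x => e x - d x) (-1) 1 (Be + Bd) hw_cont
      (fun x hx => (((hG.1 x (Set.Ioo_subset_Icc_self hx)).hasDerivAt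
          (Icc_mem_nhds hx.1 hx.2)).sub
        ((hF.1 x (Set.Ioo_subset_Icc_self hx)).hasDerivAt (Icc_mem_nhds hx.1 hx.2))))
      (fun x hx => le_trans (abs_sub _ _)
        (add_le_add (hBe x (Set.Ioo_subset_Icc_self hx)) (hBd x (Set.Ioo_subset_Icc_self hx))))
    set KF : ℝ := BG * (Be + Bd) + (Bψ + Bφ) * (Mg * (Ld:ℝ)) with hKF
    have hKF0 : 0 ≤ KF := by positivity
    have hwb : ∀ x ∈ s, |w x| ≤ Bψ + Bφ := fun x hx =>
      le_trans (abs_sub _ _) (add_le_add (hBψ x hx) (hBφ x hx))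
    have hF0lip : ∀ x ∈ s, ∀ y ∈ s, |F0 x - F0 y| ≤ KF * |x - y| := by
      intro x hx y hy
      have hid : F0 x - F0 y = gder E (d x) * (w x - w y) + w y * (gder E (d x) - gder E (d y)) := by
        simp only [hF0]; ring
      rw [hid]
      calc |gder E (d x) * (w x - w y) + w y * (gder E (d x) - gder E (d y))|
          ≤ |gder E (d x)| * |w x - w y| + |w y| * |gder E (d x) - gder E (d y)| := by
            refine le_trans (abs_add_le _ _) ?_
            rw [abs_mul, abs_mul]
        _ ≤ BG * ((Be + Bd) * |x - y|) + (Bψ + Bφ) * (Mg * ((Ld:ℝ) * |x - y|)) := by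
            apply add_le_add
            · exact mul_le_mul (hBG x hx) (hwlip y hy x hx) (abs_nonneg _) hBG0
            · exact mul_le_mul (hwb y hy) (hGlip x hx y hy) (abs_nonneg _) (by positivity)
        _ = KF * |x - y| := by rw [hKF]; ring
    set Fx : ℝ → ℝ := fun u => F0 (clamp u) with hFx
    have hFxc : Continuous Fx := hF0c.comp_continuous clamp_continuous clamp_mem
    have hFxlip : ∀ x y : ℝ, |Fx x - Fx y| ≤ KF * |x - y| := fun x y =>
      le_trans (hF0lip _ (clamp_mem x) _ (clamp_mem y))
        (mul_le_mul_of_nonneg_left (clamp_lip x y) hKF0)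
    have hTae : ∀ᵐ u ∂(volume : Measure ℝ), u ∈ Set.Ioo (-1:ℝ) 1 → HasDerivAt Fx (T u) u := by
      filter_upwards [hEL] with u hu hmem
      obtain ⟨d2, hd2, heq⟩ := hu hmem
      have hus : u ∈ s := Set.Ioo_subset_Icc_self hmem
      have hG' : HasDerivAt (fun x => gder E (d x)) (-(d u * (d u - E))⁻¹ * d2) u :=
        (gder_hasDeriv E (d u) (hdgt u hus)).comp u hd2
      have hwd : HasDerivAt w (e u - d u) u :=
        ((hG.1 u hus).hasDerivAt (Icc_mem_nhds hmem.1 hmem.2)).sub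
          ((hF.1 u hus).hasDerivAt (Icc_mem_nhds hmem.1 hmem.2))
      have hprod := hG'.mul hwd
      have hden : d u * (d u - E) ≠ 0 := (hposr (d u) (hdmem u hus)).ne'
      have hcoef : -(d u * (d u - E))⁻¹ * d2 = 1 - Lder (φ u) - ρ u := by
        rw [Lder_compl]
        have hex := (one_add_exp_pos (φ u)).ne'
        field_simp at heq ⊢
        linarith [heq]
      have hEq : Fx =ᶠ[𝓝 u] F0 := by
        filter_upwards [Icc_mem_nhds hmem.1 hmem.2] with x hx
        simp only [hFx, clamp_eq hx]
      apply HasDerivAt.congr_of_eventuallyEq _ hEq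
      refine hprod.congr_deriv (Eq.symm ?_)
      rw [hT]
      show (1 - Lder (φ u) - ρ u) * (ψ u - φ u) + gder E (d u) * (e u - d u) = _
      rw [← hcoef]
    have hftc := ftcLip Fx T KF hFxc hFxlip hTae hTm
    rw [intervalIntegral.integral_of_le (by norm_num : (-1:ℝ) ≤ 1), hftc]
    have e1 : Fx 1 = 0 := by
      simp only [hFx, clamp_eq (by norm_num : (1:ℝ) ∈ Set.Icc (-1:ℝ) 1), hF0, hw,
        hG.2.2.2.1, hF.2.2.2.1]
      ring
    have e2 : Fx (-1) = 0 := by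
      simp only [hFx, clamp_eq (by norm_num : (-1:ℝ) ∈ Set.Icc (-1:ℝ) 1), hF0, hw,
        hG.2.2.1, hF.2.2.1]
      ring
    rw [e1, e2, sub_zero]
  -- pointwise identity and assembly
  have hpt : ∀ u ∈ Set.uIcc (-1:ℝ) 1,
      (ρ u * Real.log (ρ u) + (1 - ρ u) * Real.log (1 - ρ u)
      + (1 - ρ u) * ψ u - Real.log (1 + Real.exp (ψ u))
      + (if E = 0 then Real.log (e u) + 1
         else E⁻¹ * (e u * Real.log (e u) - (e u - E) * Real.log (e u - E)))
      - A) = (P1 u + P2 u) + (h1 u + (h2 u + T u)) := by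
    intro u _
    simp only [hP1, hP2, hh1, hh2, hT, Lfun, Lder, gfun, gder]
    by_cases hE : E = 0 <;> simp only [hE, if_true, if_false] <;> ring
  have hpt2 : ∀ u ∈ Set.uIcc (-1:ℝ) 1,
      (ρ u * Real.log (ρ u) + (1 - ρ u) * Real.log (1 - ρ u)
      + (1 - ρ u) * φ u - Real.log (1 + Real.exp (φ u))
      + (if E = 0 then Real.log (d u) + 1
         else E⁻¹ * (d u * Real.log (d u) - (d u - E) * Real.log (d u - E)))
      - A) = P1 u + P2 u := by
    intro u _
    simp only [hP1, hP2, Lfun, gfun]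
    ring
  unfold GEint
  rw [intervalIntegral.integral_congr hpt, intervalIntegral.integral_congr hpt2,
    intervalIntegral.integral_add (int_P1.add int_P2) (int_h1.add (int_h2.add int_T)),
    intervalIntegral.integral_add int_h1 (int_h2.add int_T),
    intervalIntegral.integral_add int_h2 int_T, hT0]
  simp only [hh1, hh2]
  ring

lemma Lfun_continuous : Continuous Lfun := by
  rw [continuous_iff_continuousAt]; exact fun x => (Lfun_hasDeriv x).continuousAt

lemma Lder_continuous : Continuous Lder := by
  rw [continuous_iff_continuousAt]; exact fun x => (Lder_hasDeriv x).continuousAt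


/-- The supremum defining `S_E(ρ)` is attained exactly at the solution `Φ(ρ)` of the
Euler–Lagrange equation, which is the unique maximizer. -/
theorem stmt9 (ρm ρp φm φp E0 : ℝ)
    (h0 : 0 < ρm) (h1 : ρm < ρp) (h2 : ρp < 1)
    (hφm : φm = Real.log (ρm / (1 - ρm))) (hφp : φp = Real.log (ρp / (1 - ρp)))
    (hE0 : E0 = (φp - φm) / 2) (E J A : ℝ) (hE : E < E0)
    (hJneg : J ≤ 0) (hJeq : (1/2) * (∫ r in ρm..ρp, (E * chi r - J)⁻¹) = 1)
    (hA : A = if E = 0 then Real.log ((ρp - ρm) / 2) + 1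
      else Real.log (-J) + (1/2) * ∫ r in ρm..ρp, (E * chi r)⁻¹ * Real.log (1 - E * chi r / J))
    (ρ : ℝ → ℝ) (hρ : memM ρ)
    (φ d : ℝ → ℝ) (hF : memF φm φp E φ d) (hEL : solvesEL E ρ φ d) :
    SE φm φp E A ρ = GEint E A ρ φ d ∧
    (∀ ψ e : ℝ → ℝ, memF φm φp E ψ e → ¬ Set.EqOn ψ φ (Set.Icc (-1:ℝ) 1) →
      GEint E A ρ ψ e < SE φm φp E A ρ) := by
  have hInt2le : ∀ (ψ' e' : ℝ → ℝ), memF φm φp E ψ' e' →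
      (∫ u in (-1:ℝ)..1, (gfun E (e' u) - gfun E (d u) - gder E (d u) * (e' u - d u))) ≤ 0 := by
    intro ψ' e' hG
    have := intervalIntegral.integral_nonneg (μ := volume) (by norm_num : (-1:ℝ) ≤ 1)
      (f := fun u => -(gfun E (e' u) - gfun E (d u) - gder E (d u) * (e' u - d u)))
      (fun u hu => by
        have := gfun_tangent_le E (d u) (e' u) (hF.2.2.2.2 u hu) (hG.2.2.2.2 u hu)
        simp only [neg_nonneg]
        linarith)
    rw [intervalIntegral.integral_neg] at this
    linarith
  have hInt1le : ∀ (ψ' : ℝ → ℝ),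
      (∫ u in (-1:ℝ)..1, (Lfun (φ u) - Lfun (ψ' u) + Lder (φ u) * (ψ' u - φ u))) ≤ 0 := by
    intro ψ'
    have := intervalIntegral.integral_nonneg (μ := volume) (by norm_num : (-1:ℝ) ≤ 1)
      (f := fun u => -(Lfun (φ u) - Lfun (ψ' u) + Lder (φ u) * (ψ' u - φ u)))
      (fun u hu => by
        have := Lfun_tangent_le (φ u) (ψ' u)
        simp only [neg_nonneg]
        linarith)
    rw [intervalIntegral.integral_neg] at this
    linarith
  have hub : ∀ (ψ' e' : ℝ → ℝ), memF φm φp E ψ' e' →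
      GEint E A ρ ψ' e' ≤ GEint E A ρ φ d := by
    intro ψ' e' hG
    rw [key E A φm φp ρ φ d ψ' e' hρ hF hG hEL]
    linarith [hInt1le ψ', hInt2le ψ' e' hG]
  have hgreat : IsGreatest { x | ∃ φ' d' : ℝ → ℝ, memF φm φp E φ' d' ∧ x = GEint E A ρ φ' d' }
      (GEint E A ρ φ d) := by
    constructor
    · exact ⟨φ, d, hF, rfl⟩
    · rintro x ⟨φ', d', hF', rfl⟩
      exact hub φ' d' hF'
  have hSE : SE φm φp E A ρ = GEint E A ρ φ d := hgreat.csSup_eq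
  refine ⟨hSE, ?_⟩
  intro ψ e hG hneq
  rw [hSE]
  -- find a point of difference, necessarily interior
  have hex : ∃ u0 ∈ Set.Icc (-1:ℝ) 1, ψ u0 ≠ φ u0 := by
    by_contra hcon
    push_neg at hcon
    exact hneq (fun x hx => hcon x hx)
  obtain ⟨u0, hu0, hu0ne⟩ := hex
  -- strict inequality for the first integral
  have hh1cont : ContinuousOn
      (fun u => Lfun (φ u) - Lfun (ψ u) + Lder (φ u) * (ψ u - φ u)) (Set.Icc (-1:ℝ) 1) := by
    have hφc := memF_cont_phi hF
    have hψc := memF_cont_phi hG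
    exact ((Lfun_continuous.comp_continuousOn hφc).sub
      (Lfun_continuous.comp_continuousOn hψc)).add
      ((Lder_continuous.comp_continuousOn hφc).mul (hψc.sub hφc))
  have hstrict : (∫ u in (-1:ℝ)..1,
      (Lfun (φ u) - Lfun (ψ u) + Lder (φ u) * (ψ u - φ u))) < 0 := by
    have h0int : (∫ u in (-1:ℝ)..1, (0:ℝ)) = 0 := by simp
    rw [← h0int]
    apply intervalIntegral.integral_lt_integral_of_continuousOn_of_le_of_exists_lt
      (by norm_num) hh1cont continuousOn_const
    · intro u hu
      have := Lfun_tangent_le (φ u) (ψ u)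
      linarith
    · refine ⟨u0, hu0, ?_⟩
      have := Lfun_tangent_lt (φ u0) (ψ u0) hu0ne
      linarith
  rw [key E A φm φp ρ φ d ψ e hρ hF hG hEL]
  linarith [hInt2le ψ e hG]
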